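/- Let m, E, α, c, A₁, A₂, L, D be real numbers with m ≠ 0, E ≠ 0, satisfying the Laplace–Runge–Lenz relation A₁² + A₂² = m²α² + 2mEL² and D = L² − 2cA₁. Then (A₁/(mE) − 2c)² + (A₂/(mE))² = 4c² + α²/E² + 2D/(mE). (Since (A₁/(mE), A₂/(mE)) is the second focus of the Kepler flight ellipse, this shows that conservation of the Gallavotti–Jauslin integral D = L² − 2cA₁ and the energy E forces the second foci of consecutive flight ellipses to lie on the circle centered at (2c, 0) — the second focus of the boundary conic — with radius R = √(4c² + α²/E² + 2D/(mE)).) -/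

import Mathlib

/-- **The Gallavotti–Jauslin integral forces the second foci onto a circle.**
If `A₁² + A₂² = m²α² + 2mEL²` (the Laplace–Runge–Lenz relation) and `D = L² − 2cA₁`,
with `m ≠ 0`, `E ≠ 0`, then
`(A₁/(mE) − 2c)² + (A₂/(mE))² = 4c² + α²/E² + 2D/(mE)`;
i.e. the second focus `(A₁/(mE), A₂/(mE))` of the Kepler flight ellipse lies on the
circle centered at `(2c, 0)` of radius `√(4c² + α²/E² + 2D/(mE))`. -/
theorem kepler_foci_circle_from_integrals
    (m E α c A₁ A₂ L D : ℝ) (hm : m ≠ 0) (hE : E ≠ 0)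
    (hLRL : A₁ ^ 2 + A₂ ^ 2 = m ^ 2 * α ^ 2 + 2 * m * E * L ^ 2)
    (hD : D = L ^ 2 - 2 * c * A₁) :
    (A₁ / (m * E) - 2 * c) ^ 2 + (A₂ / (m * E)) ^ 2
      = 4 * c ^ 2 + α ^ 2 / E ^ 2 + 2 * D / (m * E) := by
  subst hD
  field_simp
  linear_combination hLRL
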